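/- Upper bound on tainted shipments used by the greedy inspection heuristic: let L, C be finite sets and fix a scenario s. Suppose x_l ∈ {0,1}, z_{ls} ∈ {0,1}, 0 ≤ r_{ls} ≤ q_{ls} ≤ 1, κ_l ≥ 0, and nonnegative reals p_{lcs}, k_{lcs}, d_{lcs} satisfy, for every l and c: ∑_{c ∈ C} ((1 − q_{ls})·p_{lcs} + k_{lcs} + d_{lcs}) ≤ κ_l·x_l, k_{lcs} + d_{lcs} = q_{ls}·p_{lcs}, and k_{lcs} ≤ r_{ls}·p_{lcs} whenever z_{ls} = 1. Then the total quantity of tainted products shipped satisfies ∑_{l ∈ L} ∑_{c ∈ C} k_{lcs} ≤ ∑_{l ∈ L} (q_{ls}·(1 − z_{ls}) + r_{ls}·z_{ls})·κ_l·x_l. -/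
import Mathlib


/-- Upper bound on tainted shipments used by the greedy inspection
heuristic (fixed scenario): under the capacity constraint, the balance constraint, and
the inspection constraint `k ≤ r·p` when `z = 1`, the total tainted quantity shipped
satisfies `∑_l ∑_c k_{lc} ≤ ∑_l (q_l·(1 − z_l) + r_l·z_l)·κ_l·x_l`. -/
theorem tainted_shipment_upper_bound {L C : Type*} [Fintype L] [Fintype C]
    (x z q r κ : L → ℝ)
    (p k d : L → C → ℝ)
    (hx : ∀ l, x l = 0 ∨ x l = 1)
    (hz : ∀ l, z l = 0 ∨ z l = 1)
    (hr0 : ∀ l, 0 ≤ r l) (hrq : ∀ l, r l ≤ q l) (hq1 : ∀ l, q l ≤ 1)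
    (hκ : ∀ l, 0 ≤ κ l)
    (hp : ∀ l c, 0 ≤ p l c) (hk : ∀ l c, 0 ≤ k l c) (hd : ∀ l c, 0 ≤ d l c)
    (hcap : ∀ l, ∑ c, ((1 - q l) * p l c + k l c + d l c) ≤ κ l * x l)
    (hbal : ∀ l c, k l c + d l c = q l * p l c)
    (hins : ∀ l c, z l = 1 → k l c ≤ r l * p l c) :
    ∑ l, ∑ c, k l c ≤ ∑ l, (q l * (1 - z l) + r l * z l) * κ l * x l := by
  apply Finset.sum_le_sum
  intro l _
  have hpsum : ∑ c, p l c ≤ κ l * x l := by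
    have := hcap l
    calc ∑ c, p l c = ∑ c, ((1 - q l) * p l c + k l c + d l c) := by
          apply Finset.sum_congr rfl
          intro c _
          have := hbal l c
          ring_nf
          nlinarith [hbal l c]
      _ ≤ κ l * x l := hcap l
  rcases hz l with h0 | h1
  · -- z = 0, coefficient q
    have hq0 : 0 ≤ q l := le_trans (hr0 l) (hrq l)
    have : ∑ c, k l c ≤ q l * ∑ c, p l c := by
      rw [Finset.mul_sum]
      apply Finset.sum_le_sum
      intro c _
      nlinarith [hbal l c, hd l c]
    calc ∑ c, k l c ≤ q l * ∑ c, p l c := this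
      _ ≤ q l * (κ l * x l) := by
          exact mul_le_mul_of_nonneg_left hpsum hq0
      _ = (q l * (1 - z l) + r l * z l) * κ l * x l := by rw [h0]; ring
  · -- z = 1, coefficient r
    have : ∑ c, k l c ≤ r l * ∑ c, p l c := by
      rw [Finset.mul_sum]
      exact Finset.sum_le_sum fun c _ => hins l c h1
    calc ∑ c, k l c ≤ r l * ∑ c, p l c := this
      _ ≤ r l * (κ l * x l) := mul_le_mul_of_nonneg_left hpsum (hr0 l)
      _ = (q l * (1 - z l) + r l * z l) * κ l * x l := by rw [h1]; ring
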